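/- Let F_q be a finite field of characteristic p, let 1 ≤ n ≤ q, and let b ∈ F_q. Let M(n,b) be the number of n-element subsets S of F_q with Σ_{a∈S} a = b. If p divides n, then M(n,b) = (1/q) * C(q,n) + (-1)^{n + n/p} * (v(b)/q) * C(q/p, n/p), where v(b) = q-1 if b = 0 and v(b) = -1 if b ≠ 0. -/

import Mathlib

open Finset

lemma auxA {F : Type*} [Field F] [Fintype F] [DecidableEq F] (n : ℕ) (b c : F)
    (hb : b ≠ 0) (hc : c ≠ 0) :
    (univ.filter fun S : Finset F => S.card = n ∧ ∑ x ∈ S, x = b).card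
      = (univ.filter fun S : Finset F => S.card = n ∧ ∑ x ∈ S, x = c).card := by
  set u : F := c / b with hu
  have hu0 : u ≠ 0 := div_ne_zero hc hb
  have hinj : Function.Injective (fun x : F => u * x) :=
    fun x y h => by field_simp [hu0] at h; exact h
  apply Finset.card_bij (fun S _ => S.image (fun x => u * x))
  · intro S hS
    simp only [mem_filter, mem_univ, true_and] at hS ⊢
    constructor
    · rw [Finset.card_image_of_injective _ hinj]; exact hS.1
    · rw [Finset.sum_image (fun x _ y _ h => hinj h), ← Finset.mul_sum, hS.2, hu]
      field_simp
  · intro S hS T hT h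
    have := congrArg (Finset.image (fun x => u⁻¹ * x)) h
    simpa [Finset.image_image, Function.comp, inv_mul_cancel₀ hu0, Finset.image_id'] using this
  · intro T hT
    refine ⟨T.image (fun x => u⁻¹ * x), ?_, ?_⟩
    · simp only [mem_filter, mem_univ, true_and] at hT ⊢
      have hinj' : Function.Injective (fun x : F => u⁻¹ * x) :=
        fun x y h => by field_simp [hu0] at h; exact h
      constructor
      · rw [Finset.card_image_of_injective _ hinj']; exact hT.1
      · rw [Finset.sum_image (fun x _ y _ h => hinj' h), ← Finset.mul_sum, hT.2, hu]
        field_simp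
    · simp [Finset.image_image, Function.comp, mul_inv_cancel₀ hu0, Finset.image_id']

lemma auxB {F : Type*} [Field F] [Fintype F] [DecidableEq F] (n : ℕ) :
    ∑ b : F, (univ.filter fun S : Finset F => S.card = n ∧ ∑ x ∈ S, x = b).card
      = (Fintype.card F).choose n := by
  have h1 : ∀ b : F, (univ.filter fun S : Finset F => S.card = n ∧ ∑ x ∈ S, x = b)
      = (univ.filter fun S : Finset F => S.card = n).filter (fun S => ∑ x ∈ S, x = b) := by
    intro b; rw [Finset.filter_filter]
  simp_rw [h1]
  rw [← Finset.card_eq_sum_card_fiberwise (fun S _ => Finset.mem_univ (∑ x ∈ S, x))]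
  have : (univ.filter fun S : Finset F => S.card = n) = (univ : Finset F).powersetCard n := by
    rw [Finset.powersetCard_eq_filter, Finset.powerset_univ]
  rw [this, Finset.card_powersetCard, Finset.card_univ]

open Finset Polynomial

lemma auxC {F : Type*} [Field F] [Fintype F] [DecidableEq F] (p n : ℕ) (hp : p.Prime)
    (hchar : CharP F p) (hpn : p ∣ n) (hnq : n ≤ Fintype.card F)
    (hA : ∀ b c : F, b ≠ 0 → c ≠ 0 →
      (univ.filter fun S : Finset F => S.card = n ∧ ∑ x ∈ S, x = b).card
      = (univ.filter fun S : Finset F => S.card = n ∧ ∑ x ∈ S, x = c).card) :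
    ((univ.filter fun S : Finset F => S.card = n ∧ ∑ x ∈ S, x = (0:F)).card : ℂ)
      - ((univ.filter fun S : Finset F => S.card = n ∧ ∑ x ∈ S, x = (1:F)).card : ℂ)
      = (-1 : ℂ) ^ (n + n / p) * ((Fintype.card F / p).choose (n / p)) := by
  haveI : Fact p.Prime := ⟨hp⟩
  haveI : NeZero p := ⟨hp.ne_zero⟩
  set q := Fintype.card F with hqdef
  obtain ⟨m, hm⟩ := hpn
  obtain ⟨e, -, he⟩ := FiniteField.card F p
  have hpq : p ∣ q := by rw [hqdef, he]; exact dvd_pow_self p e.pos.ne'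
  obtain ⟨d, hd⟩ := hpq
  have hmd : m ≤ d := le_of_mul_le_mul_left (by rw [← hm, ← hd]; exact hnq) hp.pos
  have hnp : n / p = m := by rw [hm, Nat.mul_div_cancel_left _ hp.pos]
  have hqp : q / p = d := by rw [hd, Nat.mul_div_cancel_left _ hp.pos]
  -- the character
  set ψ := AddChar.FiniteField.primitiveChar_to_Complex F with hψdef
  have hψ : ψ ≠ 1 := by
    have h := AddChar.FiniteField.primitiveChar_to_Complex_isPrimitive F (one_ne_zero)
    rwa [AddChar.mulShift_one] at h
  have hpow : ∀ x : F, ψ x ^ p = 1 := by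
    intro x
    rw [← AddChar.map_nsmul_eq_pow, nsmul_eq_mul, CharP.cast_eq_zero F p, zero_mul,
      AddChar.map_zero_eq_one]
  have hne : ∀ x : F, ψ x ≠ 0 := by
    intro x h
    have := hpow x
    rw [h, zero_pow hp.ne_zero] at this
    exact zero_ne_one this
  have hmul : ∀ S : Finset F, ψ (∑ x ∈ S, x) = ∏ x ∈ S, ψ x := by
    intro S
    induction S using Finset.cons_induction with
    | empty => simp [AddChar.map_zero_eq_one]
    | cons a s ha ih =>
        rw [Finset.cons_eq_insert, Finset.sum_insert ha, Finset.prod_insert ha,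
          AddChar.map_add_eq_mul, ih]
  obtain ⟨a₀, ha₀⟩ := AddChar.ne_one_iff.1 hψ
  set ζ := ψ a₀ with hζdef
  have horder : orderOf ζ = p := orderOf_eq_prime (hpow a₀) ha₀
  have hprim : IsPrimitiveRoot ζ p := horder ▸ IsPrimitiveRoot.orderOf ζ
  -- image of ψ equals the p-th roots of unity
  have himg : univ.image ψ = Polynomial.nthRootsFinset p (1 : ℂ) := by
    apply subset_antisymm
    · intro z hz
      obtain ⟨x, -, rfl⟩ := Finset.mem_image.1 hz
      exact (Polynomial.mem_nthRootsFinset hp.pos (1 : ℂ)).2 (hpow x)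
    · intro z hz
      obtain ⟨j, -, rfl⟩ := hprim.eq_pow_of_pow_eq_one ((Polynomial.mem_nthRootsFinset hp.pos (1 : ℂ)).1 hz)
      exact Finset.mem_image.2 ⟨j • a₀, mem_univ _, by rw [AddChar.map_nsmul_eq_pow]⟩
  -- all fibers have the same size K
  set K := (univ.filter fun a : F => ψ a = 1).card with hKdef
  have hfib : ∀ c : F, (univ.filter fun a : F => ψ a = ψ c).card = K := by
    intro c
    apply Finset.card_bij' (fun a _ => a - c) (fun a _ => a + c)
    · intro a ha
      simp only [mem_filter, mem_univ, true_and] at ha ⊢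
      have : ψ (a - c) * ψ c = ψ c := by
        rw [← AddChar.map_add_eq_mul, sub_add_cancel, ha]
      exact mul_right_cancel₀ (hne c) (by rw [this, one_mul])
    · intro a ha
      simp only [mem_filter, mem_univ, true_and] at ha ⊢
      rw [AddChar.map_add_eq_mul, ha, one_mul]
    · intro a _; exact sub_add_cancel a c
    · intro a _; exact add_sub_cancel_right a c
  -- q = p * K, so K = d
  have hqK : q = p * K := by
    have h1 : (univ : Finset F).card = ∑ z ∈ univ.image ψ,
        (univ.filter fun a : F => ψ a = z).card :=
      Finset.card_eq_sum_card_fiberwise (fun a _ => Finset.mem_image_of_mem ψ (mem_univ a))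
    rw [Finset.card_univ] at h1
    have h2 : ∀ z ∈ univ.image ψ, (univ.filter fun a : F => ψ a = z).card = K := by
      intro z hz
      obtain ⟨c, -, rfl⟩ := Finset.mem_image.1 hz
      exact hfib c
    rw [Finset.sum_congr rfl h2, Finset.sum_const, smul_eq_mul, himg,
      hprim.card_nthRootsFinset] at h1
    exact h1
  have hKd : K = d := by
    have := hqK.symm.trans hd
    exact Nat.eq_of_mul_eq_mul_left hp.pos this
  -- the product of (X + ψ a)
  have hroots : ∏ z ∈ Polynomial.nthRootsFinset p (1 : ℂ), (X + C z) = X ^ p - (-1 : ℂ[X]) ^ p := by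
    have h1 := Polynomial.X_pow_sub_one_eq_prod hp.pos hprim
    have h2 := congrArg (fun f : ℂ[X] => f.comp (-X)) h1
    simp only [Polynomial.sub_comp, Polynomial.pow_comp, Polynomial.X_comp,
      Polynomial.one_comp, Polynomial.prod_comp, Polynomial.C_comp] at h2
    have h3 : ∀ z ∈ Polynomial.nthRootsFinset p (1 : ℂ),
        (-X : ℂ[X]) - C z = (-1) * (X + C z) := by intro z _; ring
    rw [Finset.prod_congr rfl h3, Finset.prod_mul_distrib, Finset.prod_const,
      hprim.card_nthRootsFinset] at h2
    have h4 : ((-1 : ℂ[X]) ^ p) * ((-1 : ℂ[X]) ^ p) = 1 := by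
      rw [← pow_add, ← two_mul, pow_mul]; simp
    calc ∏ z ∈ Polynomial.nthRootsFinset p (1 : ℂ), (X + C z)
        = ((-1:ℂ[X])^p * (-1:ℂ[X])^p) * ∏ z ∈ Polynomial.nthRootsFinset p (1 : ℂ), (X + C z) := by
          rw [h4, one_mul]
      _ = (-1:ℂ[X])^p * ((-X)^p - 1) := by rw [mul_assoc, ← h2]
      _ = X ^ p - (-1 : ℂ[X]) ^ p := by
          rw [mul_sub, mul_one, ← mul_pow, neg_mul_neg, one_mul]
  have hP : ∏ a : F, (X + C (ψ a)) = (X ^ p - (-1 : ℂ[X]) ^ p) ^ d := by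
    rw [← Finset.prod_fiberwise_of_maps_to (fun a (_ : a ∈ univ) =>
      Finset.mem_image_of_mem ψ (mem_univ a)) (fun a => X + C (ψ a))]
    have h2 : ∀ z ∈ univ.image ψ,
        (∏ a ∈ univ.filter fun a : F => ψ a = z, (X + C (ψ a))) = (X + C z) ^ K := by
      intro z hz
      obtain ⟨c, -, rfl⟩ := Finset.mem_image.1 hz
      rw [← hfib c, ← Finset.prod_const]
      apply Finset.prod_congr rfl
      intro a ha
      rw [(Finset.mem_filter.1 ha).2]
    rw [Finset.prod_congr rfl h2, Finset.prod_pow, himg, hroots, hKd]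
  -- rewrite target exponents
  rw [hnp, hqp]
  -- the constant c
  set c : ℂ := -(-1)^p with hcdef
  have hCc : (C c : ℂ[X]) = -(-1)^p := by
    simp [hcdef, map_neg, map_pow]
  have hXpC : (X ^ p - (-1:ℂ[X])^p) = X^p + C c := by
    rw [hCc]; ring
  have hexp : (X^p + C c)^d = ∑ k ∈ range (d+1), C (c^(d-k) * (d.choose k)) * X^(p*k) := by
    rw [add_pow]
    apply Finset.sum_congr rfl
    intro k hk
    simp only [Polynomial.C_mul, Polynomial.C_pow, Polynomial.C_eq_natCast, ← pow_mul]
    ring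
  have hcoeff : ((X^p + C c)^d).coeff (p*(d-m)) = c^m * (d.choose m) := by
    rw [hexp, Polynomial.finset_sum_coeff]
    rw [Finset.sum_eq_single (d-m)]
    · rw [Polynomial.coeff_C_mul_X_pow, if_pos rfl, Nat.sub_sub_self hmd, Nat.choose_symm hmd]
    · intro k hk hkne
      rw [Polynomial.coeff_C_mul_X_pow, if_neg]
      intro hcontra
      exact hkne (Nat.eq_of_mul_eq_mul_left hp.pos hcontra).symm
    · intro h
      exact absurd (Finset.mem_range.2 (Nat.lt_succ_of_le (Nat.sub_le d m))) h
  have hcm : c^m = (-1:ℂ)^(n+m) := by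
    have h1 : c = (-1:ℂ)^(p+1) := by rw [hcdef, pow_succ]; ring
    rw [h1, ← pow_mul]
    congr 1
    rw [hm]; ring
  have hqn : q - n = p * (d - m) := by
    have h5 : p * d = p * (d - m) + p * m := by rw [← Nat.mul_add, Nat.sub_add_cancel hmd]
    omega
  -- side 1 : the character sum over n-subsets
  have hTle : q - n ≤ (univ : Finset F).card := by rw [Finset.card_univ]; exact Nat.sub_le _ _
  have hT := Finset.prod_X_add_C_coeff (univ : Finset F) (fun a => ψ a) hTle
  rw [Finset.card_univ, ← hqdef, Nat.sub_sub_self hnq] at hT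
  have hside1 : ∑ t ∈ (univ : Finset F).powersetCard n, ∏ i ∈ t, ψ i
      = (-1:ℂ)^(n+m) * (d.choose m) := by
    rw [← hT, hP, hXpC, hqn, hcoeff, hcm]
  -- side 2 : group the subsets by their sum
  have hps : (univ : Finset F).powersetCard n
      = univ.filter (fun S : Finset F => S.card = n) := by
    rw [Finset.powersetCard_eq_filter, Finset.powerset_univ]
  have hsplit : ∑ t ∈ (univ : Finset F).powersetCard n, ∏ i ∈ t, ψ i
      = ∑ b : F,
          ((univ.filter fun S : Finset F => S.card = n ∧ ∑ x ∈ S, x = b).card : ℂ) * ψ b := by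
    calc ∑ t ∈ (univ : Finset F).powersetCard n, ∏ i ∈ t, ψ i
        = ∑ t ∈ (univ : Finset F).powersetCard n, ψ (∑ x ∈ t, x) :=
          Finset.sum_congr rfl (fun t _ => (hmul t).symm)
      _ = ∑ b : F, ∑ t ∈ ((univ : Finset F).powersetCard n).filter
            (fun t => ∑ x ∈ t, x = b), ψ (∑ x ∈ t, x) :=
          (Finset.sum_fiberwise_of_maps_to (fun t _ => mem_univ _) _).symm
      _ = ∑ b : F,
          ((univ.filter fun S : Finset F => S.card = n ∧ ∑ x ∈ S, x = b).card : ℂ) * ψ b := by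
          apply Finset.sum_congr rfl
          intro b _
          have h6 : ((univ : Finset F).powersetCard n).filter (fun t => ∑ x ∈ t, x = b)
              = univ.filter fun S : Finset F => S.card = n ∧ ∑ x ∈ S, x = b := by
            rw [hps, Finset.filter_filter]
          rw [h6]
          rw [Finset.sum_congr rfl (fun t ht => by
            rw [(Finset.mem_filter.1 ht).2.2] : ∀ t ∈ _, ψ (∑ x ∈ t, x) = ψ b)]
          rw [Finset.sum_const, nsmul_eq_mul]
  -- evaluate the sum over b
  have hsum0 : ∑ b : F,
      ((univ.filter fun S : Finset F => S.card = n ∧ ∑ x ∈ S, x = b).card : ℂ) * ψ b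
      = ((univ.filter fun S : Finset F => S.card = n ∧ ∑ x ∈ S, x = (0:F)).card : ℂ)
        - ((univ.filter fun S : Finset F => S.card = n ∧ ∑ x ∈ S, x = (1:F)).card : ℂ) := by
    rw [← Finset.sum_erase_add _ _ (mem_univ (0:F))]
    have h1 : ∀ b ∈ univ.erase (0:F),
        ((univ.filter fun S : Finset F => S.card = n ∧ ∑ x ∈ S, x = b).card : ℂ) * ψ b
        = ((univ.filter fun S : Finset F => S.card = n ∧ ∑ x ∈ S, x = (1:F)).card : ℂ) * ψ b := by
      intro b hb
      rw [hA b 1 (Finset.ne_of_mem_erase hb) one_ne_zero]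
    rw [Finset.sum_congr rfl h1, ← Finset.mul_sum]
    have h2 : ∑ b ∈ univ.erase (0:F), ψ b = -1 := by
      have h3 := AddChar.sum_eq_zero_of_ne_one hψ
      rw [← Finset.sum_erase_add _ _ (mem_univ (0:F)), AddChar.map_zero_eq_one] at h3
      linear_combination h3
    rw [h2, AddChar.map_zero_eq_one, mul_one, mul_neg_one]
    ring
  rw [← hsum0, ← hsplit, hside1]

open scoped Classical in
theorem stmt_3 (p e q n : ℕ) (hp : p.Prime) (he : 0 < e) (hq : q = p ^ e)
    (F : Type*) [Field F] [Fintype F] (hF : Fintype.card F = q) (hchar : CharP F p)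
    (hn1 : 1 ≤ n) (hnq : n ≤ q) (hpn : p ∣ n) (b : F) :
    (Nat.card {S : Finset F // S.card = n ∧ ∑ x ∈ S, x = b} : ℚ)
      = (1 / q) * q.choose n
        + (-1 : ℚ) ^ (n + n / p) * ((if b = 0 then (q : ℚ) - 1 else -1) / q)
            * ((q / p).choose (n / p)) := by
  haveI := Classical.decEq F
  have hcard : ∀ c : F, Nat.card {S : Finset F // S.card = n ∧ ∑ x ∈ S, x = c}
      = (Finset.univ.filter fun S : Finset F => S.card = n ∧ ∑ x ∈ S, x = c).card := by
    intro c
    rw [Nat.card_eq_fintype_card, Fintype.card_subtype]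
  set N : F → ℕ := fun c => (Finset.univ.filter fun S : Finset F => S.card = n ∧ ∑ x ∈ S, x = c).card with hN
  have hq0 : (q : ℚ) ≠ 0 := by
    have : 0 < q := hq ▸ pow_pos hp.pos e
    positivity
  have hq1 : 1 ≤ q := by have : 0 < q := hq ▸ pow_pos hp.pos e; omega
  -- the ℤ identity from the character computation
  have hCeq := auxC (F := F) p n hp hchar hpn (hF.symm ▸ hnq)
    (fun b c hb hc => auxA n b c hb hc)
  rw [hF] at hCeq
  have hZ : ((N 0 : ℤ) : ℚ) - ((N 1 : ℤ) : ℚ)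
      = (-1 : ℚ)^(n + n/p) * ((q / p).choose (n / p)) := by
    have hZ' : (N 0 : ℤ) - N 1 = (-1)^(n + n/p) * ((q / p).choose (n / p)) := by
      exact_mod_cast hCeq
    exact_mod_cast congrArg (fun z : ℤ => (z : ℚ)) hZ'
  have E2 : (N 0 : ℚ) - (N 1 : ℚ) = (-1 : ℚ)^(n + n/p) * ((q / p).choose (n / p)) := by
    push_cast at hZ; exact_mod_cast hZ
  -- the total count
  have hBsum : ∑ c : F, (N c : ℚ) = (q.choose n : ℚ) := by
    have := auxB (F := F) n
    rw [hF] at this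
    exact_mod_cast congrArg (fun z : ℕ => (z : ℚ)) this
  have E1 : (N 0 : ℚ) + ((q : ℚ) - 1) * (N 1 : ℚ) = (q.choose n : ℚ) := by
    rw [← hBsum, ← Finset.sum_erase_add _ _ (Finset.mem_univ (0:F))]
    have h1 : ∀ c ∈ Finset.univ.erase (0:F), (N c : ℚ) = (N 1 : ℚ) := by
      intro c hc
      exact_mod_cast congrArg (fun z : ℕ => (z : ℚ))
        (auxA n c 1 (Finset.ne_of_mem_erase hc) one_ne_zero)
    rw [Finset.sum_congr rfl h1, Finset.sum_const, nsmul_eq_mul]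
    have h2 : (Finset.univ.erase (0:F)).card = q - 1 := by
      rw [Finset.card_erase_of_mem (Finset.mem_univ _), Finset.card_univ, hF]
    rw [h2]
    have h3 : ((q - 1 : ℕ) : ℚ) = (q : ℚ) - 1 := by
      push_cast [Nat.cast_sub hq1]; ring
    rw [h3]; ring
  rcases eq_or_ne b 0 with rfl | hb
  · rw [hcard 0, if_pos rfl]
    show (N 0 : ℚ) = _
    field_simp
    linear_combination E1 + ((q:ℚ) - 1) * E2
  · rw [hcard b, if_neg hb]
    have : N b = N 1 := auxA n b 1 hb one_ne_zero
    show (N b : ℚ) = _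
    rw [this]
    field_simp
    linear_combination E1 - E2
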